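/- With single-peaked preferences and Bloc voting selecting k winners: if C_i is a non-winning candidate with i ≤ k and there exists a winning candidate C_j with j ≥ i+k, then fewer than N/2 voters prefer C_i to C_{i+k}; consequently C_i cannot majority-defeat any of C_{i+1}, ..., C_{i+k}, and neither can any candidate to the left of C_i. -/

import Mathlib

open Finset

/-- Each voter's preference is a strict total (linear) order on the candidates. -/
def StrictPrefs {m N : ℕ} (P : Fin N → Fin m → Fin m → Prop) : Prop :=
  ∀ v : Fin N, IsStrictTotalOrder (Fin m) (P v)

/-- Single-peakedness w.r.t. the left-right order on `Fin m`: for `i < j < k`,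
no voter ranks both `C_i` and `C_k` above `C_j`. -/
def SinglePeaked {m N : ℕ} (P : Fin N → Fin m → Fin m → Prop) : Prop :=
  ∀ (v : Fin N) (i j k : Fin m), i < j → j < k → ¬ (P v i j ∧ P v k j)

/-- Number of voters preferring `a` to `b`. -/
def prefCount {m N : ℕ} (P : Fin N → Fin m → Fin m → Prop)
    [∀ v a b, Decidable (P v a b)] (a b : Fin m) : ℕ :=
  (univ.filter fun v => P v a b).card

/-- `a` majority-defeats `b`: strictly more than `N/2` voters prefer `a` to `b`. -/
def Defeats {m N : ℕ} (P : Fin N → Fin m → Fin m → Prop)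
    [∀ v a b, Decidable (P v a b)] (a b : Fin m) : Prop :=
  2 * prefCount P a b > N

instance {m N : ℕ} (P : Fin N → Fin m → Fin m → Prop)
    [∀ v a b, Decidable (P v a b)] (a b : Fin m) : Decidable (Defeats P a b) :=
  inferInstanceAs (Decidable (2 * prefCount P a b > N))

/-- Voter `v` approves candidate `a` under Bloc voting with `k` winners:
`a` is among `v`'s top `k` candidates. -/
def Approves {m N : ℕ} (P : Fin N → Fin m → Fin m → Prop)
    [∀ v a b, Decidable (P v a b)] (k : ℕ) (v : Fin N) (a : Fin m) : Prop :=
  (univ.filter fun b => P v b a).card < k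

instance {m N : ℕ} (P : Fin N → Fin m → Fin m → Prop)
    [∀ v a b, Decidable (P v a b)] (k : ℕ) (v : Fin N) (a : Fin m) :
    Decidable (Approves P k v a) :=
  inferInstanceAs (Decidable ((univ.filter fun b => P v b a).card < k))

/-- Bloc score of candidate `a`: the number of voters who approve `a`. -/
def blocScore {m N : ℕ} (P : Fin N → Fin m → Fin m → Prop)
    [∀ v a b, Decidable (P v a b)] (k : ℕ) (a : Fin m) : ℕ :=
  (univ.filter fun v => Approves P k v a).card

/-- `W` is a winning set under Bloc voting with `k` winners (strict vote totals):
`W` has `k` members and each member has strictly more approvals than each non-member. -/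
def IsWinningSet {m N : ℕ} (P : Fin N → Fin m → Fin m → Prop)
    [∀ v a b, Decidable (P v a b)] (k : ℕ) (W : Finset (Fin m)) : Prop :=
  W.card = k ∧ ∀ w ∈ W, ∀ c ∉ W, blocScore P k w > blocScore P k c

/-- If `C_i` is non-winning with `i ≤ k` (one-indexed, i.e. `(i:ℕ) < k`
zero-indexed) and some winner `C_j` satisfies `j ≥ i + k`, then fewer than `N/2`
voters prefer `C_i` to `C_{i+k}`; consequently neither `C_i` nor any candidate to
its left majority-defeats any of `C_{i+1}, ..., C_{i+k}`. -/
theorem nonwinner_cannot_defeat_right {m N : ℕ}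
    (P : Fin N → Fin m → Fin m → Prop) [∀ v a b, Decidable (P v a b)]
    (hP : StrictPrefs P) (hSP : SinglePeaked P) (hN : Odd N)
    (k : ℕ) (W : Finset (Fin m)) (hW : IsWinningSet P k W)
    (i j : Fin m) (hi : i ∉ W) (hik : (i : ℕ) < k)
    (hj : j ∈ W) (hge : (i : ℕ) + k ≤ (j : ℕ)) :
    (∀ t : Fin m, (t : ℕ) = (i : ℕ) + k → 2 * prefCount P i t < N) ∧
    (∀ i' : Fin m, i' ≤ i →
      ∀ l : Fin m, i < l → (l : ℕ) ≤ (i : ℕ) + k → ¬ Defeats P i' l) := by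
  obtain ⟨hWcard, hWbeats⟩ := hW
  have htri : ∀ (v : Fin N) (a b : Fin m), a ≠ b → P v a b ∨ P v b a := by
    intro v a b hab
    rcases (show P v a b ∨ a = b ∨ P v b a from (em (P v a b)).elim Or.inl fun h1 => (em (P v b a)).elim (fun h2 => Or.inr (Or.inr h2)) fun h2 => Or.inr (Or.inl ((hP v).trichotomous a b h1 h2))) with h | h | h
    · exact Or.inl h
    · exact absurd h hab
    · exact Or.inr h
  have htrans : ∀ (v : Fin N) (a b c : Fin m), P v a b → P v b c → P v a c :=
    fun v a b c => (hP v).trans a b c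
  have hirr : ∀ (v : Fin N) (a : Fin m), ¬ P v a a := fun v a => (hP v).irrefl a
  have hasym : ∀ (v : Fin N) (a b : Fin m), P v a b → ¬ P v b a :=
    fun v a b h h' => hirr v a (htrans v a b a h h')
  have htm : (i : ℕ) + k < m := lt_of_le_of_lt hge j.isLt
  set t : Fin m := ⟨(i : ℕ) + k, htm⟩ with ht_def
  have hk : 0 < k := Nat.lt_of_le_of_lt (Nat.zero_le _) hik
  have hit : i < t := by simp [Fin.lt_def, ht_def]; omega
  have htj : t ≤ j := by simp [Fin.le_def, ht_def]; omega
  have hij : i < j := lt_of_lt_of_le hit htj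
  -- Any voter preferring C_i to C_t approves C_i
  have happrove : ∀ v, P v i t → Approves P k v i := by
    intro v hvit
    unfold Approves
    by_cases hcase : ∃ b : Fin m, i < b ∧ P v b i
    · obtain ⟨b0, hb0i, hb0⟩ := hcase
      calc (univ.filter fun b => P v b i).card ≤ (Ioo i t).card := by
            apply card_le_card
            intro b hb
            rw [mem_filter] at hb
            have hbi := hb.2
            rw [mem_Ioo]
            constructor
            · rcases lt_trichotomy b i with h | h | h
              · exact absurd ⟨hbi, hb0⟩ (hSP v b i b0 h hb0i)
              · exact absurd hbi (h ▸ hirr v i)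
              · exact h
            · by_contra hbt
              push_neg at hbt
              rcases eq_or_lt_of_le hbt with h | h
              · exact hasym v i t hvit (h ▸ hbi)
              · exact hSP v i t b hit h ⟨hvit, htrans v b i t hbi hvit⟩
        _ = (t : ℕ) - (i : ℕ) - 1 := Fin.card_Ioo i t
        _ < k := by simp [ht_def]; omega
    · push_neg at hcase
      calc (univ.filter fun b => P v b i).card ≤ (Iio i).card := by
            apply card_le_card
            intro b hb
            rw [mem_filter] at hb
            rw [mem_Iio]
            rcases lt_trichotomy b i with h | h | h
            · exact h
            · exact absurd hb.2 (h ▸ hirr v i)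
            · exact absurd hb.2 (hcase b h)
        _ = (i : ℕ) := Fin.card_Iio i
        _ < k := hik
  -- Any voter approving C_j prefers C_j to C_i
  have hji : ∀ v, Approves P k v j → P v j i := by
    intro v hv
    by_contra hnot
    have hij' : P v i j := (htri v i j (Fin.ne_of_lt hij)).resolve_right hnot
    have hsub : Ico i j ⊆ univ.filter (fun b => P v b j) := by
      intro b hb
      rw [mem_Ico] at hb
      rw [mem_filter]
      refine ⟨mem_univ _, ?_⟩
      rcases eq_or_lt_of_le hb.1 with h | h
      · exact h ▸ hij'
      · have hnjb : ¬ P v j b := fun hjb => hSP v i b j h hb.2 ⟨htrans v i j b hij' hjb, hjb⟩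
        exact (htri v b j (Fin.ne_of_lt hb.2)).resolve_right hnjb
    have hcard := card_le_card hsub
    rw [Fin.card_Ico] at hcard
    unfold Approves at hv
    omega
  -- P v j i → P v t i
  have hti : ∀ v, P v j i → P v t i := by
    intro v hv
    rcases eq_or_lt_of_le htj with h | h
    · exact h ▸ hv
    · by_contra hnt
      have hit' : P v i t := (htri v i t (Fin.ne_of_lt hit)).resolve_right hnt
      exact hSP v i t j hit h ⟨hit', htrans v j i t hv hit'⟩
  have c1 : prefCount P i t ≤ blocScore P k i :=
    card_le_card (monotone_filter_right _ (fun v _ hv => happrove v hv))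
  have c2 : blocScore P k i < blocScore P k j := hWbeats j hj i hi
  have c3 : blocScore P k j ≤ prefCount P t i :=
    card_le_card (monotone_filter_right _ (fun v _ hv => hti v (hji v hv)))
  have ctot : prefCount P i t + prefCount P t i = N := by
    unfold prefCount
    have hcongr : (univ.filter fun v => P v t i) = (univ.filter fun v => ¬ P v i t) := by
      apply filter_congr
      intro v _
      constructor
      · exact fun h h' => hasym v t i h h'
      · exact fun h => (htri v i t (Fin.ne_of_lt hit)).resolve_left h
    rw [hcongr, Finset.card_filter_add_card_filter_not, card_univ, Fintype.card_fin]
  have part1 : 2 * prefCount P i t < N := by omega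
  constructor
  · intro t' ht'
    have : t' = t := Fin.ext ht'
    rw [this]
    exact part1
  · intro i' hi'le l hil hlle
    unfold Defeats
    have hsub : ∀ v, P v i' l → P v i t := by
      intro v h
      have hil' : P v i l := by
        rcases eq_or_lt_of_le hi'le with heq | hlt
        · exact heq ▸ h
        · by_contra hn
          have hli : P v l i := (htri v l i (Fin.ne_of_lt hil).symm).resolve_right hn
          exact hSP v i' i l hlt hil ⟨htrans v i' l i h hli, hli⟩
      have hlt' : l ≤ t := by simp [Fin.le_def, ht_def]; omega
      rcases eq_or_lt_of_le hlt' with heq | hlt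
      · exact heq ▸ hil'
      · by_contra hn
        have hti' : P v t i := (htri v t i (Fin.ne_of_lt hit).symm).resolve_right hn
        exact hSP v i l t hil hlt ⟨hil', htrans v t i l hti' hil'⟩
    have hle : prefCount P i' l ≤ prefCount P i t :=
      card_le_card (monotone_filter_right _ (fun v _ hv => hsub v hv))
    omega
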